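/- Let K be a field of characteristic zero, R = K[t]/(t²), and M = R/(t) viewed as an R-module. Then the ring R[M] of polynomial laws M → R is isomorphic to the K-vector space spanned by 1, t, tx, tx², tx³, ... inside R[x] (i.e., the subring of R[x] spanned by 1 and by t·x^d for d ≥ 0, with (t x^i)(t x^j) = 0), and R[M] is not a Noetherian ring: the ideal generated by {t, tx, tx², ...} is not finitely generated. -/

import Mathlib

open scoped TensorProduct

universe u

/-- A polynomial law `M → N` over `R`: a family of maps `A ⊗[R] M → A ⊗[R] N`, one for every
commutative `R`-algebra `A`, commuting with base change along all `R`-algebra homomorphisms. -/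
structure PolyLaw (R : Type u) [CommRing R] (M N : Type u)
    [AddCommGroup M] [Module R M] [AddCommGroup N] [Module R N] : Type (u + 1) where
  toFun : ∀ (A : Type u) [CommRing A] [Algebra R A], A ⊗[R] M → A ⊗[R] N
  isCompat : ∀ {A B : Type u} [CommRing A] [Algebra R A] [CommRing B] [Algebra R B]
      (φ : A →ₐ[R] B) (x : A ⊗[R] M),
      LinearMap.rTensor N φ.toLinearMap (toFun A x) = toFun B (LinearMap.rTensor M φ.toLinearMap x)

namespace PolyLaw

variable {R : Type u} [CommRing R] {M N P : Type u}
  [AddCommGroup M] [Module R M] [AddCommGroup N] [Module R N] [AddCommGroup P] [Module R P]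

theorem ext' {f g : PolyLaw R M N}
    (h : ∀ (A : Type u) [CommRing A] [Algebra R A] (x : A ⊗[R] M), f.toFun A x = g.toFun A x) :
    f = g := by
  cases f; cases g
  simp only [mk.injEq]
  funext A instA instB x
  exact h A x

/-- A polynomial law is homogeneous of degree `d` if `φ_A (a • m) = a ^ d • φ_A m` always. -/
def IsHomogeneous (f : PolyLaw R M N) (d : ℕ) : Prop :=
  ∀ (A : Type u) [CommRing A] [Algebra R A] (a : A) (x : A ⊗[R] M),
    f.toFun A (a • x) = a ^ d • f.toFun A x

/-- The polynomial law induced by a linear map. -/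
noncomputable def ofLinear (ψ : M →ₗ[R] N) : PolyLaw R M N where
  toFun A _ _ := LinearMap.lTensor A ψ
  isCompat φ x := by
    show LinearMap.rTensor N φ.toLinearMap (LinearMap.lTensor _ ψ x)
      = LinearMap.lTensor _ ψ (LinearMap.rTensor M φ.toLinearMap x)
    rw [← LinearMap.comp_apply, ← LinearMap.comp_apply,
      LinearMap.rTensor_comp_lTensor, LinearMap.lTensor_comp_rTensor]

/-- Composition of polynomial laws. -/
def comp (g : PolyLaw R N P) (f : PolyLaw R M N) : PolyLaw R M P where
  toFun A _ _ x := g.toFun A (f.toFun A x)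
  isCompat φ x := by rw [g.isCompat φ, f.isCompat φ]

/-- Translation by an element `u : N`, as a polynomial law `N → N`. -/
noncomputable def translation (u : N) : PolyLaw R N N where
  toFun A _ _ x := x + (1 : A) ⊗ₜ[R] u
  isCompat φ x := by
    simp [map_add, LinearMap.rTensor_tmul, map_one]

end PolyLaw

namespace PolyLaw

variable {R : Type u} [CommRing R] {M N : Type u}
  [AddCommGroup M] [Module R M] [AddCommGroup N] [Module R N]

noncomputable instance : Zero (PolyLaw R M N) :=
  ⟨{ toFun := fun A _ _ _ => 0, isCompat := fun φ x => by simp }⟩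

noncomputable instance : Add (PolyLaw R M N) :=
  ⟨fun f g =>
    { toFun := fun A _ _ x => f.toFun A x + g.toFun A x
      isCompat := fun φ x => by simp [map_add, f.isCompat, g.isCompat] }⟩

noncomputable instance : Neg (PolyLaw R M N) :=
  ⟨fun f =>
    { toFun := fun A _ _ x => - f.toFun A x
      isCompat := fun φ x => by simp [map_neg, f.isCompat] }⟩

noncomputable instance : SMul R (PolyLaw R M N) :=
  ⟨fun r f =>
    { toFun := fun A _ _ x => r • f.toFun A x
      isCompat := fun φ x => by simp [map_smul, f.isCompat] }⟩

@[simp] lemma zero_toFun (A : Type u) [CommRing A] [Algebra R A] (x : A ⊗[R] M) :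
    (0 : PolyLaw R M N).toFun A x = 0 := rfl

@[simp] lemma add_toFun (f g : PolyLaw R M N) (A : Type u) [CommRing A] [Algebra R A]
    (x : A ⊗[R] M) : (f + g).toFun A x = f.toFun A x + g.toFun A x := rfl

@[simp] lemma neg_toFun (f : PolyLaw R M N) (A : Type u) [CommRing A] [Algebra R A]
    (x : A ⊗[R] M) : (-f).toFun A x = - f.toFun A x := rfl

@[simp] lemma smul_toFun (r : R) (f : PolyLaw R M N) (A : Type u) [CommRing A] [Algebra R A]
    (x : A ⊗[R] M) : (r • f).toFun A x = r • f.toFun A x := rfl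

noncomputable instance : AddCommGroup (PolyLaw R M N) where
  add_assoc a b c := ext' (by intros; simp [add_assoc])
  zero_add a := ext' (by intros; simp)
  add_zero a := ext' (by intros; simp)
  add_comm a b := ext' (by intros; simp [add_comm])
  neg_add_cancel a := ext' (by intros; simp)
  nsmul := nsmulRec
  zsmul := zsmulRec

noncomputable instance : Module R (PolyLaw R M N) where
  one_smul f := ext' (by intros; simp)
  mul_smul r s f := ext' (by intros; simp [mul_smul])
  smul_zero r := ext' (by intros; simp)
  smul_add r f g := ext' (by intros; simp)
  add_smul r s f := ext' (by intros; simp [add_smul])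
  zero_smul f := ext' (by intros; simp)

lemma rTensor_eq_algMap {A B : Type u} [CommRing A] [Algebra R A] [CommRing B] [Algebra R B]
    (φ : A →ₐ[R] B) (x : A ⊗[R] R) :
    LinearMap.rTensor R φ.toLinearMap x = Algebra.TensorProduct.map φ (AlgHom.id R R) x := by
  induction x using TensorProduct.induction_on with
  | zero => simp
  | tmul a r => simp
  | add x y hx hy => simp [map_add, hx, hy]

noncomputable instance : One (PolyLaw R M R) :=
  ⟨{ toFun := fun A _ _ _ => 1
     isCompat := fun φ x => by rw [rTensor_eq_algMap, map_one] }⟩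

noncomputable instance : Mul (PolyLaw R M R) :=
  ⟨fun f g =>
    { toFun := fun A _ _ x => f.toFun A x * g.toFun A x
      isCompat := fun φ x => by
        rw [rTensor_eq_algMap, map_mul, ← rTensor_eq_algMap, ← rTensor_eq_algMap,
          f.isCompat, g.isCompat] }⟩

@[simp] lemma one_toFun (A : Type u) [CommRing A] [Algebra R A] (x : A ⊗[R] M) :
    (1 : PolyLaw R M R).toFun A x = 1 := rfl

@[simp] lemma mul_toFun (f g : PolyLaw R M R) (A : Type u) [CommRing A] [Algebra R A]
    (x : A ⊗[R] M) : (f * g).toFun A x = f.toFun A x * g.toFun A x := rfl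

noncomputable instance : CommRing (PolyLaw R M R) :=
  { (inferInstance : AddCommGroup (PolyLaw R M R)) with
    mul := (· * ·)
    one := 1
    mul_assoc := fun a b c => ext' (by intros; simp [mul_assoc])
    one_mul := fun a => ext' (by intros; simp)
    mul_one := fun a => ext' (by intros; simp)
    left_distrib := fun a b c => ext' (by intros; simp [mul_add])
    right_distrib := fun a b c => ext' (by intros; simp [add_mul])
    mul_comm := fun a b => ext' (by intros; simp [mul_comm])
    zero_mul := fun a => ext' (by intros; simp)
    mul_zero := fun a => ext' (by intros; simp) }

noncomputable instance : Algebra R (PolyLaw R M R) :=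
  Algebra.ofModule (fun r x y => ext' (by intros; simp [smul_mul_assoc]))
    (fun r x y => ext' (by intros; simp [mul_smul_comm]))

end PolyLaw

open PolyLaw Polynomial

namespace NotNoeth

open Polynomial PolyLaw

theorem pow_X_add_C {A : Type*} [CommRing A] {a : A} (h : a * a = 0) (n : ℕ) :
    (X + C a) ^ n = X ^ n + (n : A[X]) * C a * X ^ (n - 1) := by
  induction n with
  | zero => simp
  | succ n ih =>
    rw [pow_succ, ih]
    rcases Nat.eq_zero_or_pos n with hn | hn
    · subst hn; simp
    · have hX : X ^ (n - 1) * X = (X ^ n : A[X]) := by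
        rw [← pow_succ]; congr 1; omega
      have hCa : (C a : A[X]) * C a = 0 := by rw [← C_mul, h, C_0]
      have : (X ^ n + (n : A[X]) * C a * X ^ (n - 1)) * (X + C a)
          = X ^ (n + 1) + ((n : A[X]) + 1) * C a * X ^ n := by
        have expand : (X ^ n + (n : A[X]) * C a * X ^ (n - 1)) * (X + C a)
            = X ^ n * X + (n : A[X]) * C a * (X ^ (n-1) * X) + C a * X ^ n
              + (n : A[X]) * (C a * C a) * X ^ (n - 1) := by ring
        rw [expand, hCa, hX, ← pow_succ]; ring
      rw [this]; push_cast; ring_nf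

theorem aeval_X_add_C_of_sq {A : Type*} [CommRing A] {a : A} (h : a * a = 0) (p : A[X]) :
    aeval (X + C a) p = p + C a * derivative p := by
  induction p using Polynomial.induction_on' with
  | add p q hp hq => rw [map_add, hp, hq, derivative_add]; ring
  | monomial n c =>
    rw [aeval_monomial, derivative_monomial, pow_X_add_C h]
    rcases Nat.eq_zero_or_pos n with hn | hn
    · subst hn; simp
    · rw [← C_mul_X_pow_eq_monomial, ← C_mul_X_pow_eq_monomial]
      have : algebraMap A A[X] c = C c := rfl
      rw [this]
      rw [C_mul, C_eq_natCast]
      ring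

section Generic

variable {R : Type u} [CommRing R] (t : R)

lemma t_smul_one : t • (1 : R ⧸ Ideal.span {t}) = 0 := by
  have : t • (1 : R ⧸ Ideal.span {t}) = Ideal.Quotient.mk (Ideal.span {t}) t := by
    rw [← Algebra.algebraMap_eq_smul_one, Ideal.Quotient.algebraMap_eq]
  rw [this, Ideal.Quotient.eq_zero_iff_mem]
  exact Ideal.subset_span rfl

lemma exists_rep (A : Type u) [CommRing A] [Algebra R A] (x : A ⊗[R] (R ⧸ Ideal.span {t})) :
    ∃ a : A, x = a ⊗ₜ[R] (1 : R ⧸ Ideal.span {t}) := by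
  induction x using TensorProduct.induction_on with
  | zero => exact ⟨0, by simp⟩
  | tmul a m =>
    obtain ⟨r, rfl⟩ := Ideal.Quotient.mk_surjective m
    refine ⟨r • a, ?_⟩
    have hm : Ideal.Quotient.mk (Ideal.span {t}) r = r • (1 : R ⧸ Ideal.span {t}) := by
      rw [← Algebra.algebraMap_eq_smul_one, Ideal.Quotient.algebraMap_eq]
    rw [hm, TensorProduct.tmul_smul, TensorProduct.smul_tmul']
  | add x y hx hy =>
    obtain ⟨a, rfl⟩ := hx
    obtain ⟨b, rfl⟩ := hy
    exact ⟨a + b, by rw [TensorProduct.add_tmul]⟩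

noncomputable def E (A : Type u) [CommRing A] [Algebra R A] : A ⊗[R] R ≃ₐ[R] A :=
  Algebra.TensorProduct.rid R R A

lemma E_smul {A : Type u} [CommRing A] [Algebra R A] (r : R) (y : A ⊗[R] R) :
    E (R := R) A (r • y) = r • E (R := R) A y := by
  simp [Algebra.smul_def, map_mul, AlgEquiv.commutes, E]

lemma rid_rTensor {A B : Type u} [CommRing A] [Algebra R A] [CommRing B] [Algebra R B]
    (φ : A →ₐ[R] B) (y : A ⊗[R] R) :
    E (R := R) B (LinearMap.rTensor R φ.toLinearMap y) = φ (E (R := R) A y) := by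
  induction y using TensorProduct.induction_on with
  | zero => simp
  | tmul a r =>
    simp only [LinearMap.rTensor_tmul, AlgHom.toLinearMap_apply, E,
      Algebra.TensorProduct.rid_tmul, map_smul]
  | add x y hx hy => simp [map_add, hx, hy]

variable (R)

noncomputable def toPoly : PolyLaw R (R ⧸ Ideal.span {t}) R →ₐ[R] Polynomial R where
  toFun f := E (R := R) (Polynomial R) (f.toFun (Polynomial R) (X ⊗ₜ[R] (1 : R ⧸ Ideal.span {t})))
  map_one' := by rw [one_toFun, map_one]
  map_mul' f g := by rw [mul_toFun, map_mul]
  map_zero' := by rw [zero_toFun, map_zero]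
  map_add' f g := by rw [add_toFun, map_add]
  commutes' r := by
    have h1 : (algebraMap R (PolyLaw R (R ⧸ Ideal.span {t}) R) r)
        = r • (1 : PolyLaw R (R ⧸ Ideal.span {t}) R) := rfl
    rw [h1, smul_toFun, one_toFun, E_smul, map_one, Algebra.algebraMap_eq_smul_one]

variable {R}

lemma toFun_apply (f : PolyLaw R (R ⧸ Ideal.span {t}) R) (A : Type u) [CommRing A] [Algebra R A]
    (a : A) :
    f.toFun A (a ⊗ₜ[R] (1 : R ⧸ Ideal.span {t}))
      = LinearMap.rTensor R (aeval a : Polynomial R →ₐ[R] A).toLinearMap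
          (f.toFun (Polynomial R) (X ⊗ₜ[R] (1 : R ⧸ Ideal.span {t}))) := by
  rw [f.isCompat (aeval a : Polynomial R →ₐ[R] A)]
  congr 1
  rw [LinearMap.rTensor_tmul]
  simp

lemma toPoly_injective : Function.Injective (toPoly R t) := by
  intro f g h
  apply ext'
  intro A _ _ x
  obtain ⟨a, rfl⟩ := exists_rep t A x
  rw [toFun_apply t f A a, toFun_apply t g A a]
  have hf : f.toFun (Polynomial R) (X ⊗ₜ[R] (1 : R ⧸ Ideal.span {t}))
      = g.toFun (Polynomial R) (X ⊗ₜ[R] (1 : R ⧸ Ideal.span {t})) :=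
    (E (R := R) (Polynomial R)).injective h
  rw [hf]

lemma Ct_tmul_zero : (C t : Polynomial R) ⊗ₜ[R] (1 : R ⧸ Ideal.span {t}) = 0 := by
  have hC : (C t : Polynomial R) = t • (1 : Polynomial R) := by
    rw [← Polynomial.algebraMap_eq, Algebra.algebraMap_eq_smul_one]
  rw [hC, TensorProduct.smul_tmul, t_smul_one, TensorProduct.tmul_zero]

lemma toPoly_fixed (f : PolyLaw R (R ⧸ Ideal.span {t}) R) :
    aeval (X + C t) (toPoly R t f) = toPoly R t f := by
  set φ : Polynomial R →ₐ[R] Polynomial R := aeval (X + C t) with hφ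
  have hfix : LinearMap.rTensor (R ⧸ Ideal.span {t}) φ.toLinearMap
      (X ⊗ₜ[R] (1 : R ⧸ Ideal.span {t})) = X ⊗ₜ[R] (1 : R ⧸ Ideal.span {t}) := by
    rw [LinearMap.rTensor_tmul]
    have : φ.toLinearMap X = X + C t := by simp [hφ]
    rw [AlgHom.toLinearMap_apply]
    show φ X ⊗ₜ[R] _ = _
    have hXφ : φ X = X + C t := by simp [hφ]
    rw [hXφ, TensorProduct.add_tmul, Ct_tmul_zero, add_zero]
  have h1 : toPoly R t f
      = E (R := R) (Polynomial R) (f.toFun (Polynomial R) (X ⊗ₜ[R] (1 : R ⧸ Ideal.span {t}))) := rfl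
  calc φ (toPoly R t f)
      = E (R := R) (Polynomial R) (LinearMap.rTensor R φ.toLinearMap
          (f.toFun (Polynomial R) (X ⊗ₜ[R] (1 : R ⧸ Ideal.span {t})))) := by
        rw [rid_rTensor]; rfl
    _ = E (R := R) (Polynomial R) (f.toFun (Polynomial R)
          (LinearMap.rTensor (R ⧸ Ideal.span {t}) φ.toLinearMap
            (X ⊗ₜ[R] (1 : R ⧸ Ideal.span {t})))) := by rw [f.isCompat φ]
    _ = toPoly R t f := by rw [hfix]; exact h1.symm

lemma toPoly_coeff_mem (ht2 : t * t = 0) (hann : ∀ c : R, t * c = 0 → c ∈ Ideal.span {t})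
    (hnat : ∀ n : ℕ, 0 < n → IsUnit (n : R))
    (f : PolyLaw R (R ⧸ Ideal.span {t}) R) (n : ℕ) (hn : 1 ≤ n) :
    (toPoly R t f).coeff n ∈ Ideal.span {t} := by
  set p := toPoly R t f with hp
  have h2 := toPoly_fixed t f
  rw [aeval_X_add_C_of_sq ht2 p, ← hp, add_eq_left] at h2
  -- h2 : C t * derivative p = 0  (direction?)
  obtain ⟨m, rfl⟩ : ∃ m, n = m + 1 := ⟨n - 1, by omega⟩
  have h4 : t * (p.coeff (m + 1) * ((m : R) + 1)) = 0 := by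
    have := congrArg (fun q => Polynomial.coeff q m) h2
    simpa [Polynomial.coeff_C_mul, Polynomial.coeff_derivative] using this
  have hu : IsUnit ((m + 1 : ℕ) : R) := hnat (m + 1) (by omega)
  rw [Nat.cast_add, Nat.cast_one] at hu
  have h5 : ((m : R) + 1) * (t * p.coeff (m + 1)) = 0 := by ring_nf; ring_nf at h4; linear_combination h4
  rw [hu.mul_right_eq_zero] at h5
  exact hann _ h5

lemma rTensor_eq_algMap' {A B N : Type u} [CommRing A] [Algebra R A] [CommRing B] [Algebra R B]
    [CommRing N] [Algebra R N] (φ : A →ₐ[R] B) (x : A ⊗[R] N) :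
    LinearMap.rTensor N φ.toLinearMap x = Algebra.TensorProduct.map φ (AlgHom.id R N) x := by
  induction x using TensorProduct.induction_on with
  | zero => simp
  | tmul a r => simp
  | add x y hx hy => simp [map_add, hx, hy]

noncomputable def powLaw (n : ℕ) :
    PolyLaw R (R ⧸ Ideal.span {t}) (R ⧸ Ideal.span {t}) where
  toFun A _ _ x := x ^ n
  isCompat φ x := by
    exact (rTensor_eq_algMap' φ (x ^ n)).trans
      ((map_pow (Algebra.TensorProduct.map φ (AlgHom.id R _)) x n).trans
        (congrArg (· ^ n) (rTensor_eq_algMap' φ x).symm))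

noncomputable def mu (ht2 : t * t = 0) : (R ⧸ Ideal.span {t}) →ₗ[R] R :=
  Submodule.liftQ _ (LinearMap.toSpanSingleton R R t) (by
    rw [Ideal.span, Submodule.span_le, Set.singleton_subset_iff]
    show LinearMap.toSpanSingleton R R t t = 0
    rw [LinearMap.toSpanSingleton_apply, smul_eq_mul, ht2])

lemma mu_one (ht2 : t * t = 0) : mu t ht2 (1 : R ⧸ Ideal.span {t}) = t := by
  show mu t ht2 (Submodule.Quotient.mk 1) = t
  rw [mu, Submodule.liftQ_apply, LinearMap.toSpanSingleton_apply, one_smul]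

noncomputable def genLaw (ht2 : t * t = 0) (n : ℕ) : PolyLaw R (R ⧸ Ideal.span {t}) R :=
  (ofLinear (mu t ht2)).comp (powLaw t n)

lemma toPoly_genLaw (ht2 : t * t = 0) (n : ℕ) :
    toPoly R t (genLaw t ht2 n) = C t * X ^ n := by
  have h1 : (X ⊗ₜ[R] (1 : R ⧸ Ideal.span {t})) ^ n
      = (X ^ n : Polynomial R) ⊗ₜ[R] (1 : R ⧸ Ideal.span {t}) := by
    rw [Algebra.TensorProduct.tmul_pow, one_pow]
  show E (R := R) (Polynomial R) (LinearMap.lTensor (Polynomial R) (mu t ht2)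
      ((X ⊗ₜ[R] (1 : R ⧸ Ideal.span {t})) ^ n)) = C t * X ^ n
  rw [h1, LinearMap.lTensor_tmul, mu_one]
  show (Algebra.TensorProduct.rid R R (Polynomial R)) ((X ^ n : Polynomial R) ⊗ₜ[R] t) = _
  rw [Algebra.TensorProduct.rid_tmul, Polynomial.smul_eq_C_mul]

lemma mem_adjoin_of_coeff (p : Polynomial R)
    (h : ∀ n, 1 ≤ n → p.coeff n ∈ Ideal.span {t}) :
    p ∈ Algebra.adjoin R {q : Polynomial R | ∃ n : ℕ, 1 ≤ n ∧ q = C t * X ^ n} := by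
  nth_rewrite 1 [p.as_sum_range]
  apply Subalgebra.sum_mem
  intro i _
  rcases Nat.eq_zero_or_pos i with hi | hi
  · subst hi
    rw [Polynomial.monomial_zero_left]
    have := Subalgebra.algebraMap_mem
      (Algebra.adjoin R {q : Polynomial R | ∃ n : ℕ, 1 ≤ n ∧ q = C t * X ^ n}) (p.coeff 0)
    rwa [Polynomial.algebraMap_eq] at this
  · obtain ⟨d, hd⟩ := Ideal.mem_span_singleton.1 (h i hi)
    rw [hd]
    have hmono : (Polynomial.monomial i (t * d) : Polynomial R)
        = C d * (C t * X ^ i) := by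
      rw [← Polynomial.C_mul_X_pow_eq_monomial, C_mul]
      ring
    rw [hmono]
    exact Subalgebra.mul_mem _
      (by have := Subalgebra.algebraMap_mem
            (Algebra.adjoin R {q : Polynomial R | ∃ n : ℕ, 1 ≤ n ∧ q = C t * X ^ n}) d
          rwa [Polynomial.algebraMap_eq] at this)
      (Algebra.subset_adjoin ⟨i, hi, rfl⟩)

lemma toPoly_mem (ht2 : t * t = 0) (hann : ∀ c : R, t * c = 0 → c ∈ Ideal.span {t})
    (hnat : ∀ n : ℕ, 0 < n → IsUnit (n : R)) (f : PolyLaw R (R ⧸ Ideal.span {t}) R) :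
    toPoly R t f ∈ Algebra.adjoin R {q : Polynomial R | ∃ n : ℕ, 1 ≤ n ∧ q = C t * X ^ n} :=
  mem_adjoin_of_coeff t _ (toPoly_coeff_mem t ht2 hann hnat f)

lemma adjoin_le_range (ht2 : t * t = 0) :
    Algebra.adjoin R {q : Polynomial R | ∃ n : ℕ, 1 ≤ n ∧ q = C t * X ^ n}
      ≤ (toPoly R t).range := by
  rw [Algebra.adjoin_le_iff]
  rintro q ⟨n, hn, rfl⟩
  exact ⟨genLaw t ht2 n, toPoly_genLaw t ht2 n⟩

noncomputable def theEquiv (ht2 : t * t = 0) (hann : ∀ c : R, t * c = 0 → c ∈ Ideal.span {t})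
    (hnat : ∀ n : ℕ, 0 < n → IsUnit (n : R)) :
    PolyLaw R (R ⧸ Ideal.span {t}) R ≃+*
      ↥(Algebra.adjoin R {q : Polynomial R | ∃ n : ℕ, 1 ≤ n ∧ q = C t * X ^ n}) :=
  RingEquiv.ofBijective
    ((toPoly R t).codRestrict _ (toPoly_mem t ht2 hann hnat)).toRingHom
    ⟨(AlgHom.injective_codRestrict _ _ _).2 (toPoly_injective t), by
      rintro ⟨s, hs⟩
      obtain ⟨f, hf⟩ := adjoin_le_range t ht2 hs
      exact ⟨f, Subtype.ext hf⟩⟩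

lemma span_mul_span_zero (ht2 : t * t = 0) {a b : R}
    (ha : a ∈ Ideal.span {t}) (hb : b ∈ Ideal.span {t}) : a * b = 0 := by
  obtain ⟨a', rfl⟩ := Ideal.mem_span_singleton.1 ha
  obtain ⟨b', rfl⟩ := Ideal.mem_span_singleton.1 hb
  calc t * a' * (t * b') = (t * t) * (a' * b') := by ring
  _ = 0 := by rw [ht2, zero_mul]

lemma coeff_mul_mem (p q : Polynomial R) (hq : ∀ n, q.coeff n ∈ Ideal.span {t}) (n : ℕ) :
    (p * q).coeff n ∈ Ideal.span {t} := by
  rw [Polynomial.coeff_mul]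
  exact Ideal.sum_mem _ fun c _ => Ideal.mul_mem_left _ _ (hq c.2)

lemma memS_coeff {x : Polynomial R}
    (hx : x ∈ Algebra.adjoin R {q : Polynomial R | ∃ n : ℕ, 1 ≤ n ∧ q = C t * X ^ n})
    (n : ℕ) (hn : 1 ≤ n) : x.coeff n ∈ Ideal.span {t} := by
  set T : Subalgebra R (Polynomial R) :=
    { carrier := {p : Polynomial R | ∀ m, 1 ≤ m → p.coeff m ∈ Ideal.span {t}}
      add_mem' := fun {p q} hp hq m hm => by
        rw [Polynomial.coeff_add]; exact Ideal.add_mem _ (hp m hm) (hq m hm)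
      mul_mem' := fun {p q} hp hq m hm => by
        rw [Polynomial.coeff_mul]
        refine Ideal.sum_mem _ fun c hc => ?_
        rcases Nat.eq_zero_or_pos c.1 with h1 | h1
        · have hc2 : c.2 = m := by
            have := Finset.HasAntidiagonal.mem_antidiagonal.1 hc; omega
          exact Ideal.mul_mem_left _ _ (hq c.2 (by omega))
        · exact Ideal.mul_mem_right _ _ (hp c.1 h1)
      algebraMap_mem' := fun r m hm => by
        rw [Polynomial.algebraMap_eq, Polynomial.coeff_C, if_neg (by omega)]
        exact Ideal.zero_mem _ } with hT
  have hle : Algebra.adjoin R {q : Polynomial R | ∃ n : ℕ, 1 ≤ n ∧ q = C t * X ^ n} ≤ T := by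
    rw [Algebra.adjoin_le_iff]
    rintro q ⟨k, hk, rfl⟩
    intro m hm
    show (C t * X ^ k).coeff m ∈ Ideal.span {t}
    rw [Polynomial.coeff_C_mul, Polynomial.coeff_X_pow]
    rcases eq_or_ne m k with h | h
    · rw [if_pos h, mul_one]; exact Ideal.subset_span rfl
    · rw [if_neg h, mul_zero]; exact Ideal.zero_mem _
  exact hle hx n hn

theorem ideal_not_fg (ht2 : t * t = 0) (ht0 : t ≠ 0) :
    ¬ (Ideal.span {x : ↥(Algebra.adjoin R {q : Polynomial R | ∃ n : ℕ, 1 ≤ n ∧ q = C t * X ^ n}) |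
        ∃ n : ℕ, (x : Polynomial R) = C t * X ^ n}).FG := by
  set SA := Algebra.adjoin R {q : Polynomial R | ∃ n : ℕ, 1 ≤ n ∧ q = C t * X ^ n} with hSA
  rintro ⟨F, hF⟩
  set N := F.sup (fun f => (f : Polynomial R).natDegree) with hN
  -- the ideal of elements all of whose coefficients lie in (t)
  set J0 : Ideal ↥SA :=
    { carrier := {x : ↥SA | ∀ n, (x : Polynomial R).coeff n ∈ Ideal.span {t}}
      add_mem' := fun {p q} hp hq n => by
        show ((p : Polynomial R) + q).coeff n ∈ _
        rw [Polynomial.coeff_add]; exact Ideal.add_mem _ (hp n) (hq n)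
      zero_mem' := fun n => by
        show (0 : Polynomial R).coeff n ∈ _
        rw [Polynomial.coeff_zero]; exact Ideal.zero_mem _
      smul_mem' := fun c x hx n => by
        show ((c : Polynomial R) * x).coeff n ∈ _
        exact coeff_mul_mem t _ _ hx n } with hJ0
  set J : Ideal ↥SA :=
    { carrier := {x : ↥SA | (∀ n, (x : Polynomial R).coeff n ∈ Ideal.span {t}) ∧
        ∀ n, N < n → (x : Polynomial R).coeff n = 0}
      add_mem' := fun {p q} hp hq => by
        constructor
        · intro n
          show ((p : Polynomial R) + q).coeff n ∈ _
          rw [Polynomial.coeff_add]; exact Ideal.add_mem _ (hp.1 n) (hq.1 n)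
        · intro n hn
          show ((p : Polynomial R) + q).coeff n = 0
          rw [Polynomial.coeff_add, hp.2 n hn, hq.2 n hn, add_zero]
      zero_mem' := by
        constructor
        · intro n; show (0 : Polynomial R).coeff n ∈ _
          rw [Polynomial.coeff_zero]; exact Ideal.zero_mem _
        · intro n _; show (0 : Polynomial R).coeff n = 0; rw [Polynomial.coeff_zero]
      smul_mem' := fun c x hx => by
        constructor
        · intro n
          show ((c : Polynomial R) * x).coeff n ∈ _
          exact coeff_mul_mem t _ _ hx.1 n
        · intro n hn
          show ((c : Polynomial R) * x).coeff n = 0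
          rw [Polynomial.coeff_mul]
          refine Finset.sum_eq_zero fun d hd => ?_
          have hdm := Finset.HasAntidiagonal.mem_antidiagonal.1 hd
          rcases le_or_gt d.2 N with h2 | h2
          · have h1 : 1 ≤ d.1 := by omega
            exact span_mul_span_zero t ht2 (memS_coeff t c.2 d.1 h1) (hx.1 d.2)
          · rw [hx.2 d.2 h2, mul_zero] } with hJ
  -- every element of F lies in J
  have hFsub : (F : Set ↥SA) ⊆ J := by
    intro f hf
    have hfI : f ∈ Ideal.span {x : ↥SA | ∃ n : ℕ, (x : Polynomial R) = C t * X ^ n} := by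
      rw [← hF]; exact Ideal.subset_span hf
    have hf0 : f ∈ J0 := by
      revert hfI
      refine fun hfI => Ideal.span_le.2 ?_ hfI
      rintro x ⟨n, hx⟩
      intro m
      show (x : Polynomial R).coeff m ∈ _
      rw [hx, Polynomial.coeff_C_mul, Polynomial.coeff_X_pow]
      rcases eq_or_ne m n with h | h
      · rw [if_pos h, mul_one]; exact Ideal.subset_span rfl
      · rw [if_neg h, mul_zero]; exact Ideal.zero_mem _
    refine ⟨hf0, fun n hn => ?_⟩
    apply Polynomial.coeff_eq_zero_of_natDegree_lt
    calc (f : Polynomial R).natDegree ≤ N :=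
      Finset.le_sup (f := fun g => ((g : ↥SA) : Polynomial R).natDegree) hf
    _ < n := hn
  have hJle : Ideal.span {x : ↥SA | ∃ n : ℕ, (x : Polynomial R) = C t * X ^ n} ≤ J := by
    rw [← hF]
    exact Ideal.span_le.2 hFsub
  -- the element C t * X ^ (N + 1)
  have hmem : (C t * X ^ (N + 1) : Polynomial R) ∈ SA :=
    Algebra.subset_adjoin ⟨N + 1, by omega, rfl⟩
  have hxI : (⟨C t * X ^ (N + 1), hmem⟩ : ↥SA) ∈
      Ideal.span {x : ↥SA | ∃ n : ℕ, (x : Polynomial R) = C t * X ^ n} :=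
    Ideal.subset_span ⟨N + 1, rfl⟩
  have := (hJle hxI).2 (N + 1) (by omega)
  rw [Polynomial.coeff_C_mul, Polynomial.coeff_X_pow, if_pos rfl, mul_one] at this
  exact ht0 this

theorem main_generic {R : Type u} [CommRing R] (t : R) (ht2 : t * t = 0)
    (hann : ∀ c : R, t * c = 0 → c ∈ Ideal.span {t})
    (hnat : ∀ n : ℕ, 0 < n → IsUnit (n : R)) (ht0 : t ≠ 0) :
    Nonempty (PolyLaw R (R ⧸ Ideal.span {t}) R ≃+*
        ↥(Algebra.adjoin R {p : Polynomial R | ∃ n : ℕ, 1 ≤ n ∧ p = C t * X ^ n})) ∧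
      ¬ IsNoetherianRing (PolyLaw R (R ⧸ Ideal.span {t}) R) ∧
      ¬ (Ideal.span {x : ↥(Algebra.adjoin R
            {p : Polynomial R | ∃ n : ℕ, 1 ≤ n ∧ p = C t * X ^ n}) |
          ∃ n : ℕ, (x : Polynomial R) = C t * X ^ n}).FG := by
  refine ⟨⟨theEquiv t ht2 hann hnat⟩, ?_, ideal_not_fg t ht2 ht0⟩
  intro h
  have hnoeth : IsNoetherianRing
      ↥(Algebra.adjoin R {p : Polynomial R | ∃ n : ℕ, 1 ≤ n ∧ p = C t * X ^ n}) :=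
    isNoetherianRing_of_ringEquiv _ (theEquiv t ht2 hann hnat)
  exact ideal_not_fg t ht2 ht0 (IsNoetherian.noetherian _)

end Generic

section Instantiate

variable (K : Type u) [Field K] [CharZero K]

lemma inst_ht2 : (Ideal.Quotient.mk (Ideal.span {(X : Polynomial K) ^ 2}) X) *
    (Ideal.Quotient.mk (Ideal.span {(X : Polynomial K) ^ 2}) X) = 0 := by
  rw [← map_mul, ← sq, Ideal.Quotient.eq_zero_iff_mem]
  exact Ideal.subset_span rfl

lemma inst_ht0 : (Ideal.Quotient.mk (Ideal.span {(X : Polynomial K) ^ 2}) X) ≠ 0 := by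
  intro h
  have hdvd : (X : Polynomial K) ^ 2 ∣ X :=
    Ideal.mem_span_singleton.1 (Ideal.Quotient.eq_zero_iff_mem.1 h)
  have := Polynomial.natDegree_le_of_dvd hdvd Polynomial.X_ne_zero
  rw [Polynomial.natDegree_X_pow, Polynomial.natDegree_X] at this
  omega

lemma inst_hann (c : Polynomial K ⧸ Ideal.span {(X : Polynomial K) ^ 2})
    (h : (Ideal.Quotient.mk (Ideal.span {(X : Polynomial K) ^ 2}) X) * c = 0) :
    c ∈ Ideal.span {Ideal.Quotient.mk (Ideal.span {(X : Polynomial K) ^ 2}) X} := by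
  obtain ⟨q, rfl⟩ := Ideal.Quotient.mk_surjective c
  rw [← map_mul, Ideal.Quotient.eq_zero_iff_mem, Ideal.mem_span_singleton] at h
  have hdvd : (X : Polynomial K) ∣ q := by
    rw [sq] at h
    exact (mul_dvd_mul_iff_left (Polynomial.X_ne_zero (R := K))).1 h
  obtain ⟨r, rfl⟩ := hdvd
  rw [Ideal.mem_span_singleton, map_mul]
  exact Dvd.intro _ rfl

lemma inst_hnat (n : ℕ) (hn : 0 < n) :
    IsUnit ((n : ℕ) : Polynomial K ⧸ Ideal.span {(X : Polynomial K) ^ 2}) := by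
  have hne : ((n : ℕ) : K) ≠ 0 := Nat.cast_ne_zero.2 (by omega)
  refine IsUnit.of_mul_eq_one
    (Ideal.Quotient.mk (Ideal.span {(X : Polynomial K) ^ 2}) (C (((n : ℕ) : K)⁻¹))) ?_
  have hcast : ((n : ℕ) : Polynomial K ⧸ Ideal.span {(X : Polynomial K) ^ 2})
      = Ideal.Quotient.mk (Ideal.span {(X : Polynomial K) ^ 2}) (C ((n : ℕ) : K)) := by
    rw [Polynomial.C_eq_natCast, map_natCast]
  rw [hcast, ← map_mul, ← C_mul, mul_inv_cancel₀ hne, C_1, map_one]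

end Instantiate

end NotNoeth
set_option synthInstance.maxHeartbeats 2000000 in
set_option maxHeartbeats 2000000 in
/-- Let `K` be a field of characteristic zero, `R = K[t]/(t²)` and `M = R/(t)`.  Then the ring
`R[M]` of polynomial laws `M → R` is isomorphic to the subring of `R[x]` spanned by
`1, t, tx, tx², ...` (i.e. the `R`-subalgebra generated by the `t·xⁿ`, in which
`(t xⁱ)(t xʲ) = 0`), and `R[M]` is not Noetherian: the ideal generated by `{t, tx, tx², ...}`
is not finitely generated. -/
theorem coordinate_ring_not_noetherian (K : Type u) [Field K] [CharZero K] :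
    letI R := Polynomial K ⧸ Ideal.span {(Polynomial.X : Polynomial K) ^ 2}
    letI t : R := Ideal.Quotient.mk _ Polynomial.X
    letI M := R ⧸ Ideal.span {t}
    letI S : Subalgebra R (Polynomial R) :=
      Algebra.adjoin R {p : Polynomial R | ∃ n : ℕ, 1 ≤ n ∧ p = Polynomial.C t * Polynomial.X ^ n}
    Nonempty (PolyLaw R M R ≃+* ↥S) ∧
      ¬ IsNoetherianRing (PolyLaw R M R) ∧
      ¬ (Ideal.span {x : ↥S | ∃ n : ℕ,
          (x : Polynomial R) = Polynomial.C t * Polynomial.X ^ n}).FG := by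
  exact NotNoeth.main_generic _ (NotNoeth.inst_ht2 K) (NotNoeth.inst_hann K)
    (NotNoeth.inst_hnat K) (NotNoeth.inst_ht0 K)
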